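/- Let F̆ ∈ M̆ with mean m̆ := ∫₀¹ F̆(u)du and standard deviation s̆ := ‖F̆ − m̆‖_{L²} > 0, let ε > 0, and let m ∈ ℝ with |m̆ − m| ≤ ε; write Δm := m̆ − m. If s̆ ≥ √(ε² − (Δm)²), then the infimum of ‖g − m‖_{L²} over all g ∈ M̆_ε satisfying ∫₀¹ g(u)du = m equals s̆ − √(ε² − (Δm)²) and is attained by g̲(u) := (1 − √(ε² − (Δm)²)/s̆)(F̆(u) − m̆) + m, which belongs to M̆_ε and has mean m. If instead s̆ < √(ε² − (Δm)²), then the constant function g̲ ≡ m belongs to M̆_ε and the infimum equals 0. -/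

import Mathlib

open MeasureTheory Set
open scoped RealInnerProductSpace

noncomputable section

/-- Lebesgue measure restricted to `[0,1]`. -/
def μ01 : Measure ℝ := volume.restrict (Icc (0:ℝ) 1)

instance : IsFiniteMeasure μ01 := by
  constructor
  simp [μ01, Real.volume_Icc]

/-- The set `M̆` of elements of `L²([0,1])` admitting a nondecreasing representative. -/
def Mqf : Set (Lp ℝ 2 μ01) :=
  {g | ∃ g₀ : ℝ → ℝ, MonotoneOn g₀ (Icc (0:ℝ) 1) ∧ (g : ℝ → ℝ) =ᵐ[μ01] g₀}

/-- The `ε`-Wasserstein ball of quantile functions around `F`. -/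
def Mball (F : Lp ℝ 2 μ01) (ε : ℝ) : Set (Lp ℝ 2 μ01) :=
  {g ∈ Mqf | ‖g - F‖ ≤ ε}

instance : IsProbabilityMeasure μ01 := by constructor; simp [μ01, Real.volume_Icc]

lemma L2int (f : Lp ℝ 2 μ01) : Integrable f μ01 := (Lp.memLp f).integrable one_le_two

lemma int_constL (c : ℝ) : ∫ u, (Lp.const 2 μ01 c : Lp ℝ 2 μ01) u ∂μ01 = c := by
  rw [integral_congr_ae (Lp.coeFn_const ..)]; simp

lemma int_subL (f g : Lp ℝ 2 μ01) :
    ∫ u, (f - g) u ∂μ01 = (∫ u, f u ∂μ01) - ∫ u, g u ∂μ01 := by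
  rw [integral_congr_ae (Lp.coeFn_sub f g)]
  exact integral_sub (L2int f) (L2int g)

lemma int_addL (f g : Lp ℝ 2 μ01) :
    ∫ u, (f + g) u ∂μ01 = (∫ u, f u ∂μ01) + ∫ u, g u ∂μ01 := by
  rw [integral_congr_ae (Lp.coeFn_add f g)]
  exact integral_add (L2int f) (L2int g)

lemma int_smulL (a : ℝ) (f : Lp ℝ 2 μ01) :
    ∫ u, (a • f) u ∂μ01 = a * ∫ u, f u ∂μ01 := by
  rw [integral_congr_ae (Lp.coeFn_smul a f)]
  simpa using integral_smul a (f : ℝ → ℝ)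

lemma inner_constL (f : Lp ℝ 2 μ01) (c : ℝ) : ⟪f, Lp.const 2 μ01 c⟫ = c * ∫ u, f u ∂μ01 := by
  rw [MeasureTheory.L2.inner_def]
  rw [integral_congr_ae (g := fun x => c * f x) ?_]
  · exact integral_const_mul c _
  · filter_upwards [Lp.coeFn_const (E := ℝ) 2 μ01 c] with x hx
    simp [hx, RCLike.inner_apply, mul_comm]

lemma norm_sq_constL (c : ℝ) : ‖(Lp.const 2 μ01 c : Lp ℝ 2 μ01)‖ ^ 2 = c ^ 2 := by
  rw [← real_inner_self_eq_norm_sq, inner_constL, int_constL]; ring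


set_option maxHeartbeats 1000000 in
theorem stmt2 (F : Lp ℝ 2 μ01) (hF : F ∈ Mqf) (ε : ℝ) (hε : 0 < ε)
    (mF s m : ℝ) (hmF : mF = ∫ u, F u ∂μ01)
    (hs : s = ‖F - Lp.const 2 μ01 mF‖) (hs0 : 0 < s)
    (hm : |mF - m| ≤ ε) :
    (s ≥ Real.sqrt (ε ^ 2 - (mF - m) ^ 2) →
      IsLeast
        ((fun g : Lp ℝ 2 μ01 => ‖g - Lp.const 2 μ01 m‖) ''
          {g ∈ Mball F ε | (∫ u, g u ∂μ01) = m})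
        (s - Real.sqrt (ε ^ 2 - (mF - m) ^ 2)) ∧
      (1 - Real.sqrt (ε ^ 2 - (mF - m) ^ 2) / s) • (F - Lp.const 2 μ01 mF) + Lp.const 2 μ01 m
        ∈ {g ∈ Mball F ε | (∫ u, g u ∂μ01) = m} ∧
      ‖(1 - Real.sqrt (ε ^ 2 - (mF - m) ^ 2) / s) • (F - Lp.const 2 μ01 mF) + Lp.const 2 μ01 m
          - Lp.const 2 μ01 m‖
        = s - Real.sqrt (ε ^ 2 - (mF - m) ^ 2)) ∧
    (s < Real.sqrt (ε ^ 2 - (mF - m) ^ 2) →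
      Lp.const 2 μ01 m ∈ {g ∈ Mball F ε | (∫ u, g u ∂μ01) = m} ∧
      IsLeast
        ((fun g : Lp ℝ 2 μ01 => ‖g - Lp.const 2 μ01 m‖) ''
          {g ∈ Mball F ε | (∫ u, g u ∂μ01) = m})
        0) := by
  set δ : ℝ := Real.sqrt (ε ^ 2 - (mF - m) ^ 2) with hδdef
  set H : Lp ℝ 2 μ01 := F - Lp.const 2 μ01 mF with hHdef
  have hΔsq : (mF - m) ^ 2 ≤ ε ^ 2 := by
    rcases abs_le.1 hm with ⟨h1, h2⟩
    nlinarith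
  have hδ0 : 0 ≤ δ := Real.sqrt_nonneg _
  have hδ2 : δ ^ 2 = ε ^ 2 - (mF - m) ^ 2 := Real.sq_sqrt (by linarith)
  have hIntH : ∫ u, H u ∂μ01 = 0 := by
    rw [hHdef, int_subL, int_constL, ← hmF, sub_self]
  have hnormH : ‖H‖ = s := hs.symm
  -- norm of a • H + const c
  have hcomb : ∀ a c : ℝ, ‖a • H + Lp.const 2 μ01 c‖ ^ 2 = a ^ 2 * s ^ 2 + c ^ 2 := by
    intro a c
    rw [norm_add_sq_real, real_inner_smul_left, inner_constL, hIntH, norm_smul,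
      norm_sq_constL, hnormH]
    simp [mul_pow, sq_abs]
  -- membership in Mqf of a • H + const c for a ≥ 0, together with its mean
  obtain ⟨F₀, hF₀mono, hF₀ae⟩ := hF
  have hMqf : ∀ a c : ℝ, 0 ≤ a → a • H + Lp.const 2 μ01 c ∈ Mqf := by
    intro a c ha
    refine ⟨fun x => a * (F₀ x - mF) + c, ?_, ?_⟩
    · intro x hx y hy hxy
      have := hF₀mono hx hy hxy
      have := mul_le_mul_of_nonneg_left (sub_le_sub_right this mF) ha
      simpa using add_le_add_right this c
    · filter_upwards [Lp.coeFn_add (a • H) (Lp.const 2 μ01 c), Lp.coeFn_smul a H,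
        Lp.coeFn_sub F (Lp.const 2 μ01 mF), Lp.coeFn_const (E := ℝ) 2 μ01 c,
        Lp.coeFn_const (E := ℝ) 2 μ01 mF, hF₀ae] with x h1 h2 h3 h4 h5 h6
      simp only [h1, Pi.add_apply, h2, Pi.smul_apply]
      simp only [hHdef, h3, Pi.sub_apply, h4, h5,
        Function.const_apply, smul_eq_mul, h6]
  have hmean : ∀ a c : ℝ, (∫ u, (a • H + Lp.const 2 μ01 c) u ∂μ01) = c := by
    intro a c
    rw [int_addL, int_smulL, hIntH, int_constL, mul_zero, zero_add]
  constructor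
  · -- case s ≥ δ
    intro hsδ
    set a : ℝ := 1 - δ / s with hadef
    have ha0 : 0 ≤ a := by
      have h : δ / s ≤ 1 := (div_le_one hs0).2 hsδ
      show (0:ℝ) ≤ 1 - δ / s
      linarith
    -- the candidate
    have hcand_mem : a • H + Lp.const 2 μ01 m ∈ {g ∈ Mball F ε | (∫ u, g u ∂μ01) = m} := by
      refine ⟨⟨hMqf a m ha0, ?_⟩, hmean a m⟩
      -- distance to F
      have hrw : a • H + Lp.const 2 μ01 m - F =
          (a - 1) • H + Lp.const 2 μ01 (m - mF) := by
        rw [map_sub]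
        rw [hHdef]
        module
      have hsq : ‖a • H + Lp.const 2 μ01 m - F‖ ^ 2 = ε ^ 2 := by
        rw [hrw, hcomb]
        have : (a - 1) ^ 2 * s ^ 2 = δ ^ 2 := by
          rw [hadef]
          field_simp
          ring
        rw [this, hδ2]
        ring
      have : ‖a • H + Lp.const 2 μ01 m - F‖ = ε := by
        rw [← Real.sqrt_sq (norm_nonneg _), hsq, Real.sqrt_sq hε.le]
      exact this.le
    have hcand_norm : ‖a • H + Lp.const 2 μ01 m - Lp.const 2 μ01 m‖ = s - δ := by
      rw [add_sub_cancel_right, norm_smul, hnormH]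
      rw [Real.norm_eq_abs, abs_of_nonneg ha0, hadef]
      field_simp
    refine ⟨⟨⟨a • H + Lp.const 2 μ01 m, hcand_mem, hcand_norm⟩, ?_⟩, hcand_mem, hcand_norm⟩
    -- lower bound
    rintro y ⟨g, ⟨⟨hgM, hgball⟩, hgmean⟩, rfl⟩
    have hintgF : ∫ u, (g - F) u ∂μ01 = m - mF := by
      rw [int_subL, hgmean, ← hmF]
    have h1 : ‖g - F + Lp.const 2 μ01 (mF - m)‖ ^ 2 = ‖g - F‖ ^ 2 - (mF - m) ^ 2 := by
      rw [norm_add_sq_real, inner_constL, hintgF, norm_sq_constL]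
      ring
    have h2 : ‖g - F + Lp.const 2 μ01 (mF - m)‖ ≤ δ := by
      have hb : ‖g - F‖ ^ 2 ≤ ε ^ 2 := by
        have := norm_nonneg (g - F)
        nlinarith
      have hsq : ‖g - F + Lp.const 2 μ01 (mF - m)‖ ^ 2 ≤ δ ^ 2 := by
        rw [h1, hδ2]; linarith
      nlinarith [norm_nonneg (g - F + Lp.const 2 μ01 (mF - m))]
    have h3 : g - Lp.const 2 μ01 m = H + (g - F + Lp.const 2 μ01 (mF - m)) := by
      rw [map_sub, hHdef]
      abel
    have h4 : ‖H‖ ≤ ‖g - Lp.const 2 μ01 m‖ + ‖g - F + Lp.const 2 μ01 (mF - m)‖ := by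
      calc ‖H‖ = ‖g - Lp.const 2 μ01 m - (g - F + Lp.const 2 μ01 (mF - m))‖ := by
              rw [h3]; congr 1; abel
        _ ≤ _ := norm_sub_le _ _
    simp only
    rw [hnormH] at h4
    linarith
  · -- case s < δ
    intro hsδ
    have hconstmem : Lp.const 2 μ01 m ∈ {g ∈ Mball F ε | (∫ u, g u ∂μ01) = m} := by
      refine ⟨⟨⟨fun _ => m, fun x _ y _ _ => le_rfl, Lp.coeFn_const ..⟩, ?_⟩, int_constL m⟩
      have hrw : Lp.const 2 μ01 m - F = (-1 : ℝ) • H + Lp.const 2 μ01 (m - mF) := by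
        rw [map_sub, hHdef]
        module
      have hss : s ^ 2 ≤ δ ^ 2 := by nlinarith
      have hsq : ‖Lp.const 2 μ01 m - F‖ ^ 2 ≤ ε ^ 2 := by
        rw [hrw, hcomb]
        nlinarith [hss, hδ2]
      calc ‖Lp.const 2 μ01 m - F‖ = Real.sqrt (‖Lp.const 2 μ01 m - F‖ ^ 2) :=
            (Real.sqrt_sq (norm_nonneg _)).symm
        _ ≤ Real.sqrt (ε ^ 2) := Real.sqrt_le_sqrt hsq
        _ = ε := Real.sqrt_sq hε.le
    have h0 : ‖Lp.const 2 μ01 m - Lp.const 2 μ01 m‖ = 0 := by rw [sub_self, norm_zero]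
    refine ⟨hconstmem, ⟨⟨Lp.const 2 μ01 m, hconstmem, h0⟩, ?_⟩⟩
    rintro y ⟨g, _, rfl⟩
    exact norm_nonneg _
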